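/- arXiv:2008.01847 — 4 statements merged into one kernel-verified Lean document; each statement's English description precedes it below -/
import Mathlib

section
/- Let X be a nonempty set. There is no bounded archimedean ℓ-algebra F together with a function f : X → F such that for every bounded archimedean ℓ-algebra A and every function g : X → A there exists a unique bal-morphism α : F → A with α ∘ f = g. Consequently, free objects on sets do not exist in the category of bounded archimedean ℓ-algebras. -/
/-- An ℓ-algebra: a commutative unital ℝ-algebra with a lattice order such that
addition is translation-invariant, products of nonnegatives are nonnegative, and
scalar multiplication by nonnegative reals preserves nonnegativity. -/
class LAlg (A : Type*) extends CommRing A, Lattice A, Algebra ℝ A where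
  add_le_add_right' : ∀ a b : A, a ≤ b → ∀ c : A, a + c ≤ b + c
  mul_nonneg' : ∀ a b : A, 0 ≤ a → 0 ≤ b → 0 ≤ a * b
  smul_nonneg' : ∀ (r : ℝ) (a : A), 0 ≤ r → 0 ≤ a → 0 ≤ r • a

/-- `A` is bounded: `1` is a strong order unit. -/
def LAlg.IsBounded (A : Type*) [LAlg A] : Prop := ∀ a : A, ∃ n : ℕ, a ≤ n • (1 : A)

/-- `A` is archimedean. -/
def LAlg.IsArch (A : Type*) [LAlg A] : Prop := ∀ a b : A, (∀ n : ℕ, n • a ≤ b) → a ≤ 0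

/-- The norm ‖a‖ = inf {r : ℝ | |a| ≤ r·1}, where |a| = a ⊔ -a. -/
noncomputable def lnorm {A : Type*} [LAlg A] (a : A) : ℝ := sInf {r : ℝ | a ⊔ -a ≤ r • (1 : A)}

/-- A bal-morphism: a unital ℝ-algebra homomorphism preserving binary joins. -/
def IsBalHom {A B : Type*} [LAlg A] [LAlg B] (α : A →ₐ[ℝ] B) : Prop :=
  ∀ a b : A, α (a ⊔ b) = α a ⊔ α b

noncomputable instance : LAlg ℝ where
  add_le_add_right' := fun _ _ h c => add_le_add_left h c
  mul_nonneg' := fun _ _ => mul_nonneg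
  smul_nonneg' := fun _ _ => smul_nonneg

lemma realBounded : LAlg.IsBounded ℝ := fun a => by
  obtain ⟨n, hn⟩ := exists_nat_ge a
  exact ⟨n, by simpa using hn⟩

lemma realArch : LAlg.IsArch ℝ := fun a b hab => by
  by_contra h
  push_neg at h
  obtain ⟨n, hn⟩ := exists_nat_gt (b / a)
  have := hab n
  rw [nsmul_eq_mul] at this
  have := (div_lt_iff₀ h).mp hn
  linarith

/-- there is no free bounded archimedean ℓ-algebra on a nonempty set. -/
theorem stmt1 (X : Type) [Nonempty X] (F : Type) [LAlg F]
    (hFb : LAlg.IsBounded F) (hFa : LAlg.IsArch F) (f : X → F)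
    (h : ∀ (A : Type) [LAlg A], LAlg.IsBounded A → LAlg.IsArch A →
      ∀ g : X → A, ∃! α : F →ₐ[ℝ] A, IsBalHom α ∧ α ∘ f = g) :
    False := by
  classical
  obtain ⟨x₀⟩ := (inferInstance : Nonempty X)
  obtain ⟨n, hn⟩ := hFb (f x₀)
  obtain ⟨α, ⟨hbal, hαf⟩, -⟩ := h ℝ realBounded realArch (fun _ => (n : ℝ) + 1)
  have hmono : α (f x₀) ≤ α (n • (1 : F)) := by
    have := hbal (f x₀) (n • (1 : F))
    rw [sup_eq_right.mpr hn] at this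
    exact le_sup_left.trans_eq this.symm
  have h1 : α (f x₀) = (n : ℝ) + 1 := congrFun hαf x₀
  have h2 : α (n • (1 : F)) = (n : ℝ) := by
    rw [map_nsmul, map_one, nsmul_eq_mul, mul_one]
  rw [h1, h2] at hmono
  linarith
end

section
/- Let (X, w) be a weighted set. Then there exist a uniformly complete bounded archimedean ℓ-algebra B and a function f : X → B with ‖f(x)‖ ≤ w(x) for all x ∈ X, such that for every uniformly complete bounded archimedean ℓ-algebra A and every function h : X → A with ‖h(x)‖ ≤ w(x) for all x ∈ X, there is a unique bal-morphism α : B → A with α ∘ f = h. Consequently, the forgetful functor from uniformly complete bounded archimedean ℓ-algebras to weighted sets has a left adjoint. -/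
/-- Uniform completeness: completeness in the metric induced by the norm `lnorm`. -/
def UnifComplete (B : Type*) [LAlg B] : Prop :=
  ∀ u : ℕ → B, (∀ ε : ℝ, 0 < ε → ∃ N : ℕ, ∀ m ≥ N, ∀ n ≥ N, lnorm (u m - u n) ≤ ε) →
    ∃ b : B, ∀ ε : ℝ, 0 < ε → ∃ N : ℕ, ∀ n ≥ N, lnorm (u n - b) ≤ ε

/-- A bundled uniformly complete bounded archimedean ℓ-algebra (an object of ubal). -/
structure UBalObj where
  carrier : Type
  [str : LAlg carrier]
  bounded : LAlg.IsBounded carrier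
  arch : LAlg.IsArch carrier
  complete : UnifComplete carrier

attribute [instance] UBalObj.str

/-! ### Basic lemmas about ℓ-algebras -/

namespace LAlg

variable {A : Type*} [LAlg A]

instance toAddLeftMono : AddLeftMono A :=
  ⟨fun c a b h => by simpa [add_comm] using LAlg.add_le_add_right' a b h c⟩

instance toAddRightMono : AddRightMono A :=
  ⟨fun c a b h => LAlg.add_le_add_right' a b h c⟩

theorem lnorm_def (a : A) : lnorm a = sInf {r : ℝ | |a| ≤ r • (1 : A)} := rfl

theorem smul_le_smul {r : ℝ} (hr : 0 ≤ r) {a b : A} (h : a ≤ b) : r • a ≤ r • b := by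
  have := LAlg.smul_nonneg' r (b - a) hr (by simpa using h)
  rw [smul_sub] at this
  simpa using this

/-- `a ⊓ (b + c) ≤ a ⊓ b + a ⊓ c` for nonneg elements. -/
theorem inf_add_le {a b c : A} (ha : 0 ≤ a) (hb : 0 ≤ b) (hc : 0 ≤ c) :
    a ⊓ (b + c) ≤ a ⊓ b + a ⊓ c := by
  have key : a ⊓ b + a ⊓ c = ((a + a) ⊓ (a + c)) ⊓ ((b + a) ⊓ (b + c)) := by
    rw [inf_add, add_inf, add_inf]
  rw [key]
  refine le_inf (le_inf ?_ ?_) (le_inf ?_ ?_)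
  · exact inf_le_left.trans (le_add_of_nonneg_left ha)
  · exact inf_le_left.trans (le_add_of_nonneg_right hc)
  · exact inf_le_left.trans (le_add_of_nonneg_left hb)
  · exact inf_le_right

theorem inf_nsmul_eq_zero {a b : A} (ha : 0 ≤ a) (hb : 0 ≤ b) (h : a ⊓ b = 0) (n : ℕ) :
    a ⊓ (n • b) = 0 := by
  induction n with
  | zero => simpa using inf_eq_right.mpr ha
  | succ n ih =>
    have hnb : 0 ≤ n • b := nsmul_nonneg hb n
    have h1 : a ⊓ ((n • b) + b) ≤ a ⊓ (n • b) + a ⊓ b := inf_add_le ha hnb hb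
    rw [ih, h, add_zero] at h1
    have h2 : 0 ≤ a ⊓ ((n • b) + b) := le_inf ha (by positivity)
    rw [succ_nsmul]
    exact le_antisymm h1 h2

theorem one_nonneg (hb : LAlg.IsBounded A) : (0 : A) ≤ 1 := by
  set u : A := (1 : A)⁻ with hu
  have hu0 : 0 ≤ u := negPart_nonneg 1
  obtain ⟨N, hN⟩ := hb u
  have hsub : (1 : A) = (1:A)⁺ - u := (posPart_sub_negPart 1).symm
  have key : (N + 1) • u ≤ N • (1:A)⁺ := by
    have : u + N • u ≤ N • (1:A) + N • u := add_le_add_left hN _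
    calc (N + 1) • u = u + N • u := by rw [succ_nsmul, add_comm]
    _ ≤ N • (1:A) + N • u := this
    _ = N • ((1:A)⁺ - u) + N • u := by rw [← hsub]
    _ = N • (1:A)⁺ := by rw [smul_sub]; abel
  have hinf : (1:A)⁺ ⊓ u = 0 := posPart_inf_negPart_eq_zero 1
  have hinf2 : (1:A)⁺ ⊓ ((N+1) • u) = 0 :=
    inf_nsmul_eq_zero (posPart_nonneg 1) hu0 hinf (N+1)
  have hinf3 : ((N+1) • u) ⊓ (N • (1:A)⁺) = 0 := by
    rw [inf_comm] at hinf2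
    exact inf_nsmul_eq_zero (nsmul_nonneg hu0 (N+1)) (posPart_nonneg 1) hinf2 N
  have hzero : (N + 1) • u = 0 := by
    rw [← hinf3]
    exact (inf_eq_left.mpr key).symm
  have : u ≤ (N+1) • u := by
    calc u = u + 0 := by ring_nf
    _ ≤ u + N • u := add_le_add_right (nsmul_nonneg hu0 N) u
    _ = (N+1) • u := by rw [succ_nsmul, add_comm]
  have hu_le : u ≤ 0 := this.trans_eq hzero
  have : u = 0 := le_antisymm hu_le hu0
  rw [hu] at this
  exact negPart_eq_zero.mp this

end LAlg

namespace LAlg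

variable {A : Type*} [LAlg A]

theorem smul_one_le_smul_one {r s : ℝ} (h1 : (0:A) ≤ 1) (h : r ≤ s) :
    r • (1:A) ≤ s • (1:A) := by
  have := LAlg.smul_nonneg' (s - r) 1 (by linarith) h1
  rw [sub_smul] at this
  simpa using this

theorem abs_smul_one_le (h1 : (0:A) ≤ 1) (r : ℝ) : |r • (1:A)| ≤ |r| • (1:A) := by
  refine sup_le (smul_one_le_smul_one h1 (le_abs_self r)) ?_
  rw [← neg_smul]
  exact smul_one_le_smul_one h1 (neg_le_abs r)

/-- If `|a| ≤ r•1` with `r ≥ 0` then `lnorm a ≤ r`. -/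
theorem lnorm_le {a : A} {r : ℝ} (hr : 0 ≤ r) (h : |a| ≤ r • (1:A)) : lnorm a ≤ r := by
  rw [lnorm_def]
  by_cases hbdd : BddBelow {s : ℝ | |a| ≤ s • (1:A)}
  · exact csInf_le hbdd h
  · rw [Real.sInf_of_not_bddBelow hbdd]; exact hr

/-- In an archimedean ℓ-algebra with `0 ≤ 1`, if `c ≤ ε • 1` for all `ε > 0` then `c ≤ 0`. -/
theorem le_zero_of_forall_le_eps (harch : LAlg.IsArch A) (h1 : (0:A) ≤ 1)
    {c : A} (h : ∀ ε : ℝ, 0 < ε → c ≤ ε • (1:A)) : c ≤ 0 := by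
  refine harch c 1 fun n => ?_
  cases n with
  | zero => simpa using h1
  | succ n =>
    have hpos : (0:ℝ) < (n+1 : ℕ) := by positivity
    have hc : c ≤ ((n+1:ℕ):ℝ)⁻¹ • (1:A) := h _ (by positivity)
    calc (n+1) • c = ((n+1:ℕ):ℝ) • c := (Nat.cast_smul_eq_nsmul ℝ _ c).symm
      _ ≤ ((n+1:ℕ):ℝ) • (((n+1:ℕ):ℝ)⁻¹ • (1:A)) := smul_le_smul (le_of_lt hpos) hc
      _ = (1:A) := by rw [smul_smul, mul_inv_cancel₀ (ne_of_gt hpos), one_smul]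

theorem eq_of_forall_abs_le_eps (harch : LAlg.IsArch A) (h1 : (0:A) ≤ 1)
    {a b : A} (h : ∀ ε : ℝ, 0 < ε → |a - b| ≤ ε • (1:A)) : a = b := by
  have habs : |a - b| ≤ 0 := le_zero_of_forall_le_eps harch h1 h
  have h2 : a - b ≤ 0 := (le_abs_self _).trans habs
  have h3 : -(a - b) ≤ 0 := (neg_le_abs _).trans habs
  exact sub_eq_zero.mp (le_antisymm h2 (by simpa using h3))

/-- In a bounded archimedean ℓ-algebra, `lnorm a ≤ r` implies `|a| ≤ r • 1`. -/
theorem abs_le_smul_one (hbd : LAlg.IsBounded A) (harch : LAlg.IsArch A)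
    {a : A} {r : ℝ} (h : lnorm a ≤ r) : |a| ≤ r • (1:A) := by
  have h1 : (0:A) ≤ 1 := one_nonneg hbd
  have hup : ∀ {s t : ℝ}, s ∈ {x : ℝ | |a| ≤ x • (1:A)} → s ≤ t → t ∈ {x : ℝ | |a| ≤ x • (1:A)} :=
    fun hs hst => hs.trans (smul_one_le_smul_one h1 hst)
  have hne : {x : ℝ | |a| ≤ x • (1:A)}.Nonempty := by
    obtain ⟨n, hn⟩ := hbd |a|
    exact ⟨n, by rwa [Set.mem_setOf_eq, Nat.cast_smul_eq_nsmul]⟩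
  by_cases hbdd : BddBelow {x : ℝ | |a| ≤ x • (1:A)}
  · have key : ∀ ε : ℝ, 0 < ε → |a| ≤ (r + ε) • (1:A) := by
      intro ε hε
      have hlt : sInf {x : ℝ | |a| ≤ x • (1:A)} < r + ε := by
        rw [lnorm_def] at h; linarith
      obtain ⟨s, hs, hsr⟩ := exists_lt_of_csInf_lt hne hlt
      exact hup hs (le_of_lt hsr)
    have : |a| - r • (1:A) ≤ 0 := by
      refine le_zero_of_forall_le_eps harch h1 fun ε hε => ?_
      have := key ε hε
      rw [add_smul] at this
      exact sub_le_iff_le_add.mpr (by rwa [add_comm] at this)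
    exact sub_nonpos.mp this
  · obtain ⟨s, hs, hsr⟩ := not_bddBelow_iff.mp hbdd r
    exact hup hs (le_of_lt hsr)

theorem abs_mul_le (a b : A) : |a * b| ≤ |a| * |b| := by
  have ha : a⁺ - a⁻ = a := posPart_sub_negPart a
  have hb : b⁺ - b⁻ = b := posPart_sub_negPart b
  have habs : a⁺ + a⁻ = |a| := posPart_add_negPart a
  have hbabs : b⁺ + b⁻ = |b| := posPart_add_negPart b
  have h1 : 0 ≤ a⁺ * b⁻ := LAlg.mul_nonneg' _ _ (posPart_nonneg a) (negPart_nonneg b)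
  have h2 : 0 ≤ a⁻ * b⁺ := LAlg.mul_nonneg' _ _ (negPart_nonneg a) (posPart_nonneg b)
  have h3 : 0 ≤ a⁺ * b⁺ := LAlg.mul_nonneg' _ _ (posPart_nonneg a) (posPart_nonneg b)
  have h4 : 0 ≤ a⁻ * b⁻ := LAlg.mul_nonneg' _ _ (negPart_nonneg a) (negPart_nonneg b)
  have hab : (a⁺ - a⁻) * (b⁺ - b⁻) = a * b := by rw [ha, hb]
  rw [abs_le']
  constructor
  · have heq : |a| * |b| - a * b = (a⁺ * b⁻ + a⁻ * b⁺) + (a⁺ * b⁻ + a⁻ * b⁺) := by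
      rw [← habs, ← hbabs, ← hab]; ring
    have hge : 0 ≤ |a| * |b| - a * b := by
      rw [heq]; positivity
    exact sub_nonneg.mp hge
  · have heq : |a| * |b| + a * b = (a⁺ * b⁺ + a⁻ * b⁻) + (a⁺ * b⁺ + a⁻ * b⁻) := by
      rw [← habs, ← hbabs, ← hab]; ring
    have hge : 0 ≤ |a| * |b| + a * b := by
      rw [heq]; positivity
    have := sub_nonneg.mp (by rwa [show |a| * |b| + a * b = |a| * |b| - -(a*b) by ring] at hge)
    simpa using neg_le.mp (neg_le_of_neg_le this)

theorem mul_le_of_abs_le {a b : A} {r s : ℝ} (h1 : (0:A) ≤ 1)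
    (ha : |a| ≤ r • (1:A)) (hb : |b| ≤ s • (1:A)) (hr : 0 ≤ r) (hs : 0 ≤ s) :
    |a * b| ≤ (r * s) • (1:A) := by
  have hs1 : (0:A) ≤ s • (1:A) := LAlg.smul_nonneg' s 1 hs h1
  have step1 : |a| * |b| ≤ |a| * (s • (1:A)) := by
    have := LAlg.mul_nonneg' |a| (s • (1:A) - |b|) (abs_nonneg a) (by simpa using hb)
    rw [mul_sub] at this; exact sub_nonneg.mp this
  have step2 : |a| * (s • (1:A)) ≤ (r • (1:A)) * (s • (1:A)) := by
    have := LAlg.mul_nonneg' (r • (1:A) - |a|) (s • (1:A)) (by simpa using ha) hs1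
    rw [sub_mul] at this; exact sub_nonneg.mp this
  have heq : (r • (1:A)) * (s • (1:A)) = (r * s) • (1:A) := by
    rw [smul_mul_assoc, mul_smul_comm, smul_smul, one_mul]
  exact (abs_mul_le a b).trans (step1.trans (step2.trans_eq heq))

theorem abs_sup_sub_sup_le (a b c d : A) : |a ⊔ b - (c ⊔ d)| ≤ |a - c| + |b - d| := by
  have t1 : |a ⊔ b - (c ⊔ b)| ≤ |a - c| := abs_sup_sub_sup_le_abs a c b
  have t2 : |c ⊔ b - (c ⊔ d)| ≤ |b - d| := by
    rw [sup_comm c b, sup_comm c d]; exact abs_sup_sub_sup_le_abs b d c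
  calc |a ⊔ b - (c ⊔ d)| = |(a ⊔ b - (c ⊔ b)) + (c ⊔ b - (c ⊔ d))| := congrArg abs (by abel)
    _ ≤ |a ⊔ b - (c ⊔ b)| + |c ⊔ b - (c ⊔ d)| := abs_add_le _ _
    _ ≤ |a - c| + |b - d| := add_le_add t1 t2

theorem abs_sub_abs_le (a b : A) : |a| - |b| ≤ |a - b| := by
  have : |a| ≤ |a - b| + |b| := by
    calc |a| = |(a - b) + b| := congrArg abs (by abel)
    _ ≤ |a - b| + |b| := abs_add_le _ _
  exact sub_le_iff_le_add.mpr this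

end LAlg

/-! ### Products of ℓ-algebras -/

instance Pi.lalg {ι : Type*} {F : ι → Type*} [∀ i, LAlg (F i)] : LAlg (∀ i, F i) where
  add_le_add_right' a b h c := fun i => LAlg.add_le_add_right' (a i) (b i) (h i) (c i)
  mul_nonneg' a b ha hb := fun i => LAlg.mul_nonneg' (a i) (b i) (ha i) (hb i)
  smul_nonneg' r a hr ha := fun i => LAlg.smul_nonneg' r (a i) hr (ha i)

namespace LAlg

variable {ι : Type*} {F : ι → Type*} [∀ i, LAlg (F i)]

theorem pi_sup_apply (p q : ∀ i, F i) (i : ι) : (p ⊔ q) i = p i ⊔ q i := rfl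
theorem pi_abs_apply (p : ∀ i, F i) (i : ι) : |p| i = |p i| := rfl
theorem pi_smul_apply (r : ℝ) (p : ∀ i, F i) (i : ι) : (r • p) i = r • (p i) := rfl
theorem pi_le_iff {p q : ∀ i, F i} : p ≤ q ↔ ∀ i, p i ≤ q i := Iff.rfl

theorem pi_isArch (h : ∀ i, LAlg.IsArch (F i)) : LAlg.IsArch (∀ i, F i) := by
  intro a b hab i
  exact h i (a i) (b i) fun n => hab n i

theorem pi_one_nonneg (h : ∀ i, LAlg.IsBounded (F i)) : (0 : ∀ i, F i) ≤ 1 :=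
  fun i => one_nonneg (h i)

end LAlg

/-! ### Sub-ℓ-algebras as closed subsets -/

structure LCl (A : Type*) [LAlg A] where
  s : Set A
  algebraMap_mem' : ∀ r : ℝ, algebraMap ℝ A r ∈ s
  add_mem' : ∀ {a b : A}, a ∈ s → b ∈ s → a + b ∈ s
  mul_mem' : ∀ {a b : A}, a ∈ s → b ∈ s → a * b ∈ s
  sup_mem' : ∀ {a b : A}, a ∈ s → b ∈ s → a ⊔ b ∈ s

namespace LCl

variable {A : Type*} [LAlg A] (S : LCl A)

instance : SetLike (LCl A) A where
  coe S := S.s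
  coe_injective := by rintro ⟨s, _, _, _, _⟩ ⟨t, _, _, _, _⟩ h; congr

theorem mem_def {a : A} : a ∈ S ↔ a ∈ S.s := Iff.rfl

def toSubalgebra : Subalgebra ℝ A where
  carrier := S.s
  mul_mem' := S.mul_mem'
  add_mem' := S.add_mem'
  algebraMap_mem' := S.algebraMap_mem'

theorem neg_mem {a : A} (ha : a ∈ S) : -a ∈ S := by
  have := S.mul_mem' (S.algebraMap_mem' (-1)) ha
  simpa [LCl.mem_def] using this

theorem inf_mem {a b : A} (ha : a ∈ S) (hb : b ∈ S) : a ⊓ b ∈ S := by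
  have h : a ⊓ b = -(-a ⊔ -b) := by rw [neg_sup]; simp
  rw [h]
  exact S.neg_mem (S.sup_mem' (S.neg_mem ha) (S.neg_mem hb))

instance : CommRing S := inferInstanceAs (CommRing S.toSubalgebra)
instance : Algebra ℝ S := inferInstanceAs (Algebra ℝ S.toSubalgebra)

instance : Lattice S :=
  Subtype.lattice (fun _ _ ha hb => S.sup_mem' ha hb) (fun _ _ ha hb => S.inf_mem ha hb)

@[simp] theorem coe_sup (a b : S) : ((a ⊔ b : S) : A) = (a : A) ⊔ (b : A) := rfl
@[simp] theorem coe_inf (a b : S) : ((a ⊓ b : S) : A) = (a : A) ⊓ (b : A) := rfl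
@[simp] theorem coe_add (a b : S) : ((a + b : S) : A) = (a : A) + (b : A) := rfl
@[simp] theorem coe_mul (a b : S) : ((a * b : S) : A) = (a : A) * (b : A) := rfl
@[simp] theorem coe_neg (a : S) : ((-a : S) : A) = -(a : A) := rfl
@[simp] theorem coe_zero : ((0 : S) : A) = 0 := rfl
@[simp] theorem coe_one : ((1 : S) : A) = 1 := rfl
@[simp] theorem coe_sub (a b : S) : ((a - b : S) : A) = (a : A) - (b : A) := rfl
@[simp] theorem coe_smul (r : ℝ) (a : S) : ((r • a : S) : A) = r • (a : A) := rfl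
@[simp] theorem coe_nsmul (n : ℕ) (a : S) : ((n • a : S) : A) = n • (a : A) := rfl
theorem coe_le_coe {a b : S} : a ≤ b ↔ (a : A) ≤ (b : A) := Iff.rfl

instance : LAlg S where
  add_le_add_right' a b h c := by
    rw [coe_le_coe] at h ⊢
    simpa using LAlg.add_le_add_right' (a : A) b h c
  mul_nonneg' a b ha hb := by
    rw [coe_le_coe] at ha hb ⊢
    simpa using LAlg.mul_nonneg' (a : A) b (by simpa using ha) (by simpa using hb)
  smul_nonneg' r a hr ha := by
    rw [coe_le_coe] at ha ⊢
    simpa using LAlg.smul_nonneg' r (a : A) hr (by simpa using ha)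

@[simp] theorem coe_abs (a : S) : ((|a| : S) : A) = |(a : A)| := rfl

theorem lnorm_coe (a : S) : lnorm a = lnorm (a : A) := rfl

theorem isArch (h : LAlg.IsArch A) : LAlg.IsArch S := by
  intro a b hab
  rw [S.coe_le_coe]
  simpa using h (a : A) (b : A) fun n => by have := (S.coe_le_coe).mp (hab n); rwa [S.coe_nsmul] at this

theorem isBounded (h : LAlg.IsBounded A) : LAlg.IsBounded S := by
  intro a
  obtain ⟨n, hn⟩ := h (a : A)
  exact ⟨n, by rw [S.coe_le_coe, S.coe_nsmul, S.coe_one]; exact hn⟩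

end LCl

/-! ### Limit-closed subalgebras and completeness -/

namespace LAlg

variable {A : Type*} [LAlg A]

def IsLimClosed (s : Set A) : Prop :=
  ∀ b : A, (∀ ε : ℝ, 0 < ε → ∃ c ∈ s, |b - c| ≤ ε • (1:A)) → b ∈ s

theorem isLimClosed_sInter {c : Set (Set A)} (h : ∀ s ∈ c, IsLimClosed s) :
    IsLimClosed (⋂₀ c) := by
  intro b hb s hs
  exact h s hs b fun ε hε => by
    obtain ⟨d, hd, hdle⟩ := hb ε hε
    exact ⟨d, hd s hs, hdle⟩

end LAlg

namespace LCl

variable {A : Type*} [LAlg A] (S : LCl A)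

/-- The inclusion of a sub-ℓ-algebra, as an `AlgHom`. -/
def valHom : S →ₐ[ℝ] A where
  toFun := Subtype.val
  map_one' := rfl
  map_mul' _ _ := rfl
  map_zero' := rfl
  map_add' _ _ := rfl
  commutes' _ := rfl

@[simp] theorem valHom_apply (a : S) : S.valHom a = (a : A) := rfl

theorem valHom_isBalHom : IsBalHom S.valHom := fun _ _ => rfl

theorem unifComplete (hbd : LAlg.IsBounded A) (harch : LAlg.IsArch A)
    (hcpl : UnifComplete A) (hcl : LAlg.IsLimClosed S.s) : UnifComplete S := by
  intro u hu
  obtain ⟨b, hb⟩ := hcpl (fun n => (u n : A)) (by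
    intro ε hε
    obtain ⟨N, hN⟩ := hu ε hε
    exact ⟨N, fun m hm n hn => by
      have := hN m hm n hn
      rwa [← S.coe_sub, ← S.lnorm_coe]⟩)
  have hbS : b ∈ S := by
    apply hcl
    intro ε hε
    obtain ⟨N, hN⟩ := hb ε hε
    refine ⟨(u N : A), (u N).2, ?_⟩
    have := LAlg.abs_le_smul_one hbd harch (hN N le_rfl)
    rwa [abs_sub_comm] at this
  refine ⟨⟨b, hbS⟩, fun ε hε => ?_⟩
  obtain ⟨N, hN⟩ := hb ε hε
  exact ⟨N, fun n hn => by
    rw [S.lnorm_coe]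
    exact hN n hn⟩

end LCl

/-! ### Terms and the closed subalgebra generated by a function -/

inductive LTerm (X : Type) : Type where
  | var : X → LTerm X
  | const : ℚ → LTerm X
  | add : LTerm X → LTerm X → LTerm X
  | mul : LTerm X → LTerm X → LTerm X
  | sup : LTerm X → LTerm X → LTerm X

noncomputable def LTerm.eval {X : Type} {A : Type*} [LAlg A] (g : X → A) : LTerm X → A
  | .var x => g x
  | .const q => algebraMap ℝ A (q : ℝ)
  | .add t₁ t₂ => t₁.eval g + t₂.eval g
  | .mul t₁ t₂ => t₁.eval g * t₂.eval g
  | .sup t₁ t₂ => t₁.eval g ⊔ t₂.eval g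

namespace LAlg

variable {X : Type} {A : Type*} [LAlg A]

/-- The set of elements approximable by terms in `g`. -/
def genSet (g : X → A) : Set A :=
  {a : A | ∀ ε : ℝ, 0 < ε → ∃ t : LTerm X, |a - LTerm.eval g t| ≤ ε • (1:A)}

variable {g : X → A}

theorem abs_le_natCast_smul (hbd : LAlg.IsBounded A) (a : A) :
    ∃ n : ℕ, |a| ≤ (n : ℝ) • (1:A) := by
  obtain ⟨n, hn⟩ := hbd |a|
  exact ⟨n, by rwa [Nat.cast_smul_eq_nsmul]⟩

theorem var_mem_genSet (hbd : LAlg.IsBounded A) (x : X) : g x ∈ genSet g := by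
  intro ε hε
  refine ⟨.var x, ?_⟩
  have h0 : |g x - LTerm.eval g (.var x)| = 0 := by simp [LTerm.eval]
  rw [h0]
  exact smul_nonneg' ε 1 (le_of_lt hε) (one_nonneg hbd)

theorem algebraMap_mem_genSet (hbd : LAlg.IsBounded A) (r : ℝ) : algebraMap ℝ A r ∈ genSet g := by
  intro ε hε
  obtain ⟨q, hq⟩ := exists_rat_near r hε
  refine ⟨.const q, ?_⟩
  have h1 : (0:A) ≤ 1 := one_nonneg hbd
  have : algebraMap ℝ A r - LTerm.eval g (.const q) = (r - (q:ℝ)) • (1:A) := by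
    simp [LTerm.eval, Algebra.algebraMap_eq_smul_one, sub_smul]
  rw [this]
  exact (abs_smul_one_le h1 _).trans (smul_one_le_smul_one h1 (le_of_lt hq))

theorem add_mem_genSet {a b : A} (ha : a ∈ genSet g) (hb : b ∈ genSet g) :
    a + b ∈ genSet g := by
  intro ε hε
  obtain ⟨t₁, h₁⟩ := ha (ε/2) (by positivity)
  obtain ⟨t₂, h₂⟩ := hb (ε/2) (by positivity)
  refine ⟨.add t₁ t₂, ?_⟩
  have : a + b - LTerm.eval g (.add t₁ t₂)
      = (a - LTerm.eval g t₁) + (b - LTerm.eval g t₂) := by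
    simp [LTerm.eval]; abel
  rw [this]
  calc |(a - LTerm.eval g t₁) + (b - LTerm.eval g t₂)|
      ≤ |a - LTerm.eval g t₁| + |b - LTerm.eval g t₂| := abs_add_le _ _
    _ ≤ (ε/2) • (1:A) + (ε/2) • (1:A) := add_le_add h₁ h₂
    _ = ε • (1:A) := by rw [← add_smul]; norm_num

theorem sup_mem_genSet {a b : A} (ha : a ∈ genSet g) (hb : b ∈ genSet g) :
    a ⊔ b ∈ genSet g := by
  intro ε hε
  obtain ⟨t₁, h₁⟩ := ha (ε/2) (by positivity)
  obtain ⟨t₂, h₂⟩ := hb (ε/2) (by positivity)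
  refine ⟨.sup t₁ t₂, ?_⟩
  calc |a ⊔ b - LTerm.eval g (.sup t₁ t₂)|
      ≤ |a - LTerm.eval g t₁| + |b - LTerm.eval g t₂| := abs_sup_sub_sup_le _ _ _ _
    _ ≤ (ε/2) • (1:A) + (ε/2) • (1:A) := add_le_add h₁ h₂
    _ = ε • (1:A) := by rw [← add_smul]; norm_num

theorem mul_mem_genSet (hbd : LAlg.IsBounded A) {a b : A}
    (ha : a ∈ genSet g) (hb : b ∈ genSet g) : a * b ∈ genSet g := by
  have h1 : (0:A) ≤ 1 := one_nonneg hbd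
  intro ε hε
  obtain ⟨Na, hNa⟩ := abs_le_natCast_smul hbd a
  obtain ⟨Nb, hNb⟩ := abs_le_natCast_smul hbd b
  set δ : ℝ := min 1 (ε / (Na + Nb + 2)) with hδdef
  have hδpos : 0 < δ := by
    apply lt_min one_pos
    positivity
  have hδ1 : δ ≤ 1 := min_le_left _ _
  have hδ2 : δ * (Na + Nb + 2) ≤ ε := by
    rw [hδdef]
    have h2 : (0:ℝ) < Na + Nb + 2 := by positivity
    calc min 1 (ε / (Na + Nb + 2)) * (Na + Nb + 2) ≤ (ε / (Na + Nb + 2)) * (Na + Nb + 2) :=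
          mul_le_mul_of_nonneg_right (min_le_right _ _) (le_of_lt h2)
      _ = ε := div_mul_cancel₀ ε (ne_of_gt h2)
  obtain ⟨t₁, h₁⟩ := ha δ hδpos
  obtain ⟨t₂, h₂⟩ := hb δ hδpos
  set e₁ := LTerm.eval g t₁
  set e₂ := LTerm.eval g t₂
  refine ⟨.mul t₁ t₂, ?_⟩
  have he₂ : |e₂| ≤ ((Nb:ℝ) + 1) • (1:A) := by
    have habs : |e₂| ≤ |b| + |b - e₂| := by
      have h := abs_add_le b (-(b - e₂))
      rw [abs_neg] at h
      calc |e₂| = |b + -(b - e₂)| := congrArg abs (by abel)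
        _ ≤ |b| + |b - e₂| := h
    calc |e₂| ≤ |b| + |b - e₂| := habs
      _ ≤ (Nb:ℝ) • (1:A) + δ • (1:A) := add_le_add hNb h₂
      _ ≤ ((Nb:ℝ) + 1) • (1:A) := by
          rw [add_smul]
          exact add_le_add_right (smul_one_le_smul_one h1 hδ1) _
  have key : a * b - e₁ * e₂ = a * (b - e₂) + (a - e₁) * e₂ := by ring
  have step1 : |a * (b - e₂)| ≤ ((Na:ℝ) * δ) • (1:A) :=
    mul_le_of_abs_le h1 hNa h₂ (Nat.cast_nonneg Na) (le_of_lt hδpos)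
  have step2 : |(a - e₁) * e₂| ≤ (δ * ((Nb:ℝ)+1)) • (1:A) :=
    mul_le_of_abs_le h1 h₁ he₂ (le_of_lt hδpos) (by positivity)
  have : |a * b - e₁ * e₂| ≤ ((Na:ℝ) * δ + δ * ((Nb:ℝ)+1)) • (1:A) := by
    rw [key, add_smul]
    exact (abs_add_le _ _).trans (add_le_add step1 step2)
  refine this.trans (smul_one_le_smul_one h1 ?_)
  have : (Na:ℝ) * δ + δ * ((Nb:ℝ)+1) = δ * ((Na:ℝ) + (Nb:ℝ) + 1) := by ring
  rw [this]
  calc δ * ((Na:ℝ) + (Nb:ℝ) + 1) ≤ δ * ((Na:ℝ) + (Nb:ℝ) + 2) := by nlinarith [hδpos.le]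
    _ ≤ ε := hδ2

theorem genSet_isLimClosed : LAlg.IsLimClosed (genSet g) := by
  intro b hb ε hε
  obtain ⟨c, hc, hcle⟩ := hb (ε/2) (by positivity)
  obtain ⟨t, ht⟩ := hc (ε/2) (by positivity)
  refine ⟨t, ?_⟩
  calc |b - LTerm.eval g t| = |(b - c) + (c - LTerm.eval g t)| := congrArg abs (by abel)
    _ ≤ |b - c| + |c - LTerm.eval g t| := abs_add_le _ _
    _ ≤ (ε/2) • (1:A) + (ε/2) • (1:A) := add_le_add hcle ht
    _ = ε • (1:A) := by rw [← add_smul]; norm_num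

/-- The closed subalgebra generated by `g`, as an `LCl`. -/
def genLCl (hbd : LAlg.IsBounded A) (g : X → A) : LCl A where
  s := genSet g
  algebraMap_mem' := fun r => algebraMap_mem_genSet hbd r
  add_mem' := fun ha hb => add_mem_genSet ha hb
  mul_mem' := fun ha hb => mul_mem_genSet hbd ha hb
  sup_mem' := fun ha hb => sup_mem_genSet ha hb

end LAlg

/-! ### Transport of ℓ-algebra structure along an equivalence -/

namespace LAlg

variable {Y Z : Type*} [LAlg Y] (φ : Z ≃ Y)

protected noncomputable def transLattice : Lattice Z where
  le a b := φ a ≤ φ b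
  le_refl _ := le_refl _
  le_trans _ _ _ h1 h2 := le_trans h1 h2
  le_antisymm _ _ h1 h2 := φ.injective (le_antisymm h1 h2)
  sup a b := φ.symm (φ a ⊔ φ b)
  le_sup_left a b := by show φ a ≤ φ (φ.symm _); simp
  le_sup_right a b := by show φ b ≤ φ (φ.symm _); simp
  sup_le a b c h1 h2 := by show φ (φ.symm _) ≤ φ c; simpa using sup_le h1 h2
  inf a b := φ.symm (φ a ⊓ φ b)
  inf_le_left a b := by show φ (φ.symm _) ≤ φ a; simp
  inf_le_right a b := by show φ (φ.symm _) ≤ φ b; simp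
  le_inf a b c h1 h2 := by show φ a ≤ φ (φ.symm _); simpa using le_inf h1 h2

protected noncomputable def transport : LAlg Z := by
  letI : CommRing Z := φ.commRing
  letI : Algebra ℝ Z := φ.algebra ℝ
  letI : Lattice Z := LAlg.transLattice φ
  refine { add_le_add_right' := ?_, mul_nonneg' := ?_, smul_nonneg' := ?_ }
  · intro a b hab c
    have hab' : φ a ≤ φ b := hab
    show φ (a + c) ≤ φ (b + c)
    rw [Equiv.add_def, Equiv.add_def]
    simp only [Equiv.apply_symm_apply]
    exact add_le_add_left hab' _
  · intro a b ha hb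
    have h0 : φ (0 : Z) = 0 := by rw [Equiv.zero_def, Equiv.apply_symm_apply]
    have ha' : φ (0:Z) ≤ φ a := ha
    have hb' : φ (0:Z) ≤ φ b := hb
    rw [h0] at ha' hb'
    show φ 0 ≤ φ (a * b)
    rw [Equiv.mul_def, h0]
    simp only [Equiv.apply_symm_apply]
    exact LAlg.mul_nonneg' _ _ ha' hb'
  · intro r a hr ha
    have h0 : φ (0 : Z) = 0 := by rw [Equiv.zero_def, Equiv.apply_symm_apply]
    have ha' : φ (0:Z) ≤ φ a := ha
    rw [h0] at ha'
    show φ 0 ≤ φ (r • a)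
    rw [Equiv.smul_def, h0]
    simp only [Equiv.apply_symm_apply]
    exact LAlg.smul_nonneg' r _ hr ha'

end LAlg

/-! ### The index type and the free object -/

variable (X : Type) (w : X → ℝ)

structure Idx where
  s : Set (ℕ → LTerm X)
  [inst : LAlg ↥s]
  h : X → ↥s
  bdd : LAlg.IsBounded ↥s
  arch : LAlg.IsArch ↥s
  compl : UnifComplete ↥s
  hn : ∀ x, |h x| ≤ (w x) • (1 : ↥s)

attribute [instance] Idx.inst

abbrev FreeP := ∀ i : Idx X w, ↥i.s

namespace FreeF

variable {X w}

noncomputable def fvec (x : X) : FreeP X w := fun i => i.h x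

theorem freeP_one_nonneg : (0 : FreeP X w) ≤ 1 :=
  LAlg.pi_one_nonneg fun i => i.bdd

theorem freeP_isArch : LAlg.IsArch (FreeP X w) :=
  LAlg.pi_isArch fun i => i.arch

theorem abs_fvec_le (hw : ∀ x, 0 ≤ w x) (x : X) : |fvec x| ≤ (w x) • (1 : FreeP X w) :=
  fun i => i.hn x

def ClosedSub (s : Set (FreeP X w)) : Prop :=
  (∀ x, fvec x ∈ s) ∧ (∀ r : ℝ, algebraMap ℝ (FreeP X w) r ∈ s) ∧
  (∀ {a b}, a ∈ s → b ∈ s → a + b ∈ s) ∧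
  (∀ {a b}, a ∈ s → b ∈ s → a * b ∈ s) ∧
  (∀ {a b}, a ∈ s → b ∈ s → a ⊔ b ∈ s) ∧
  LAlg.IsLimClosed s

def Bset : Set (FreeP X w) := ⋂₀ {s | ClosedSub s}

theorem closedSub_Bset : ClosedSub (Bset : Set (FreeP X w)) := by
  refine ⟨?_, ?_, ?_, ?_, ?_, ?_⟩
  · exact fun x t ht => ht.1 x
  · exact fun r t ht => ht.2.1 r
  · exact fun ha hb t ht => ht.2.2.1 (ha t ht) (hb t ht)
  · exact fun ha hb t ht => ht.2.2.2.1 (ha t ht) (hb t ht)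
  · exact fun ha hb t ht => ht.2.2.2.2.1 (ha t ht) (hb t ht)
  · exact LAlg.isLimClosed_sInter fun s hs => hs.2.2.2.2.2

theorem Bset_subset {s : Set (FreeP X w)} (hs : ClosedSub s) : (Bset : Set (FreeP X w)) ⊆ s :=
  Set.sInter_subset_of_mem hs

noncomputable def BCl : LCl (FreeP X w) where
  s := Bset
  algebraMap_mem' := closedSub_Bset.2.1
  add_mem' := closedSub_Bset.2.2.1
  mul_mem' := closedSub_Bset.2.2.2.1
  sup_mem' := closedSub_Bset.2.2.2.2.1

theorem fvec_mem_BCl (x : X) : fvec x ∈ (BCl : LCl (FreeP X w)) :=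
  closedSub_Bset.1 x

/-- The set of elements with a uniform bound is a closed subalgebra. -/
theorem BCl_isBounded (hw : ∀ x, 0 ≤ w x) :
    ∀ p ∈ (Bset : Set (FreeP X w)), ∃ n : ℕ, |p| ≤ ((n:ℝ)) • (1 : FreeP X w) := by
  have h1 : (0 : FreeP X w) ≤ 1 := freeP_one_nonneg
  intro p hp
  refine Bset_subset (s := {p | ∃ n : ℕ, |p| ≤ ((n:ℝ)) • (1 : FreeP X w)}) ?_ hp
  refine ⟨?_, ?_, ?_, ?_, ?_, ?_⟩
  · intro x
    refine ⟨⌈w x⌉₊, (abs_fvec_le hw x).trans (LAlg.smul_one_le_smul_one h1 (Nat.le_ceil _))⟩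
  · intro r
    refine ⟨⌈|r|⌉₊, ?_⟩
    rw [Algebra.algebraMap_eq_smul_one]
    exact (LAlg.abs_smul_one_le h1 r).trans (LAlg.smul_one_le_smul_one h1 (Nat.le_ceil _))
  · rintro a b ⟨n, hn⟩ ⟨m, hm⟩
    refine ⟨n + m, ?_⟩
    calc |a + b| ≤ |a| + |b| := abs_add_le _ _
      _ ≤ (n:ℝ) • (1 : FreeP X w) + (m:ℝ) • 1 := add_le_add hn hm
      _ = ((n + m : ℕ):ℝ) • (1 : FreeP X w) := by rw [← add_smul]; norm_num
  · rintro a b ⟨n, hn⟩ ⟨m, hm⟩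
    refine ⟨n * m, ?_⟩
    have := LAlg.mul_le_of_abs_le h1 hn hm (Nat.cast_nonneg n) (Nat.cast_nonneg m)
    rwa [show ((n:ℝ)) * (m:ℝ) = ((n*m : ℕ):ℝ) by norm_num] at this
  · rintro a b ⟨n, hn⟩ ⟨m, hm⟩
    refine ⟨n + m, ?_⟩
    have hnm : (n:ℝ) • (1 : FreeP X w) ≤ ((n+m : ℕ):ℝ) • 1 :=
      LAlg.smul_one_le_smul_one h1 (by norm_num)
    have hmm : (m:ℝ) • (1 : FreeP X w) ≤ ((n+m : ℕ):ℝ) • 1 :=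
      LAlg.smul_one_le_smul_one h1 (by norm_num)
    have hna : a ≤ ((n+m : ℕ):ℝ) • (1 : FreeP X w) := (le_abs_self a).trans (hn.trans hnm)
    have hnb : b ≤ ((n+m : ℕ):ℝ) • (1 : FreeP X w) := (le_abs_self b).trans (hm.trans hmm)
    refine sup_le (sup_le hna hnb) ?_
    rw [neg_sup]
    exact inf_le_left.trans ((neg_le_abs a).trans (hn.trans hnm))
  · intro b hb
    obtain ⟨c, hc, hcle⟩ := hb 1 one_pos
    obtain ⟨n, hn⟩ := hc
    refine ⟨n + 1, ?_⟩
    have habs : |b| ≤ |c| + |b - c| := by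
      have h := abs_add_le c (b - c)
      calc |b| = |c + (b - c)| := congrArg abs (by abel)
        _ ≤ |c| + |b - c| := h
    calc |b| ≤ |c| + |b - c| := habs
      _ ≤ (n:ℝ) • (1 : FreeP X w) + (1:ℝ) • 1 := add_le_add hn hcle
      _ = ((n+1 : ℕ):ℝ) • (1 : FreeP X w) := by rw [← add_smul]; norm_num

theorem BCl_bounded (hw : ∀ x, 0 ≤ w x) : LAlg.IsBounded (↥(BCl : LCl (FreeP X w))) := by
  intro a
  obtain ⟨n, hn⟩ := BCl_isBounded hw (a : FreeP X w) a.2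
  refine ⟨n, ?_⟩
  rw [LCl.coe_le_coe, LCl.coe_nsmul, LCl.coe_one, ← Nat.cast_smul_eq_nsmul ℝ]
  exact (le_abs_self _).trans hn

theorem BCl_arch : LAlg.IsArch (↥(BCl : LCl (FreeP X w))) :=
  LCl.isArch _ freeP_isArch

end FreeF

namespace FreeF

variable {X : Type} {w : X → ℝ}

theorem BCl_complete (hw : ∀ x, 0 ≤ w x) : UnifComplete (↥(BCl : LCl (FreeP X w))) := by
  have hBbd := BCl_bounded hw
  have hBarch := (BCl_arch : LAlg.IsArch (↥(BCl : LCl (FreeP X w))))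
  intro u hu
  -- coordinatewise Cauchy
  have cauchy : ∀ i : Idx X w, ∀ ε : ℝ, 0 < ε → ∃ N, ∀ m ≥ N, ∀ n ≥ N,
      lnorm ((u m : FreeP X w) i - (u n : FreeP X w) i) ≤ ε := by
    intro i ε hε
    obtain ⟨N, hN⟩ := hu ε hε
    refine ⟨N, fun m hm n hn => ?_⟩
    have h2 : |u m - u n| ≤ ε • (1 : ↥(BCl : LCl (FreeP X w))) :=
      LAlg.abs_le_smul_one hBbd hBarch (hN m hm n hn)
    have h3 : |(u m : FreeP X w) - (u n : FreeP X w)| ≤ ε • (1 : FreeP X w) := by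
      have := (LCl.coe_le_coe _).mp h2
      simpa using this
    exact LAlg.lnorm_le (le_of_lt hε) (h3 i)
  have limEx : ∀ i : Idx X w, ∃ c : ↥i.s, ∀ ε : ℝ, 0 < ε → ∃ N, ∀ n ≥ N,
      lnorm ((u n : FreeP X w) i - c) ≤ ε :=
    fun i => i.compl (fun n => (u n : FreeP X w) i) (cauchy i)
  choose b hb using limEx
  have main : ∀ ε : ℝ, 0 < ε → ∃ N, ∀ n ≥ N,
      |(u n : FreeP X w) - b| ≤ ε • (1 : FreeP X w) := by
    intro ε hε
    obtain ⟨N, hN⟩ := hu (ε/2) (by positivity)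
    refine ⟨N, fun n hn i => ?_⟩
    obtain ⟨N', hN'⟩ := hb i (ε/2) (by positivity)
    set m := max N N' with hm
    have h1 : |u n - u m| ≤ (ε/2) • (1 : ↥(BCl : LCl (FreeP X w))) :=
      LAlg.abs_le_smul_one hBbd hBarch (hN n hn m (le_max_left _ _))
    have h1' : |(u n : FreeP X w) i - (u m : FreeP X w) i| ≤ (ε/2) • (1 : ↥i.s) := by
      have h1c := (LCl.coe_le_coe _).mp h1
      have h1d : |(u n : FreeP X w) - (u m : FreeP X w)| ≤ (ε/2) • (1 : FreeP X w) := by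
        simpa using h1c
      exact h1d i
    have h2 : |(u m : FreeP X w) i - b i| ≤ (ε/2) • (1 : ↥i.s) :=
      LAlg.abs_le_smul_one i.bdd i.arch (hN' m (le_max_right _ _))
    have tri : |(u n : FreeP X w) i - b i|
        ≤ |(u n : FreeP X w) i - (u m : FreeP X w) i| + |(u m : FreeP X w) i - b i| := by
      calc |(u n : FreeP X w) i - b i|
          = |((u n : FreeP X w) i - (u m : FreeP X w) i) + ((u m : FreeP X w) i - b i)| :=
            congrArg abs (by abel)
        _ ≤ _ := abs_add_le _ _
    calc |((u n : FreeP X w) - b)| i = |(u n : FreeP X w) i - b i| := rfl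
      _ ≤ (ε/2) • (1 : ↥i.s) + (ε/2) • (1 : ↥i.s) := tri.trans (add_le_add h1' h2)
      _ = ε • (1 : ↥i.s) := by rw [← add_smul]; norm_num
  have hbmem : b ∈ Bset := by
    apply closedSub_Bset.2.2.2.2.2
    intro ε hε
    obtain ⟨N, hN⟩ := main ε hε
    refine ⟨(u N : FreeP X w), (u N).2, ?_⟩
    rw [abs_sub_comm]
    exact hN N le_rfl
  refine ⟨⟨b, hbmem⟩, fun ε hε => ?_⟩
  obtain ⟨N, hN⟩ := main ε hε
  refine ⟨N, fun n hn => ?_⟩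
  rw [LCl.lnorm_coe]
  refine LAlg.lnorm_le (le_of_lt hε) ?_
  have := hN n hn
  simpa using this

noncomputable def fB (x : X) : ↥(BCl : LCl (FreeP X w)) := ⟨fvec x, fvec_mem_BCl x⟩

theorem lnorm_fB_le (hw : ∀ x, 0 ≤ w x) (x : X) : lnorm (fB x : ↥(BCl : LCl (FreeP X w))) ≤ w x := by
  rw [LCl.lnorm_coe]
  exact LAlg.lnorm_le (hw x) (abs_fvec_le hw x)

end FreeF


namespace LAlg

theorem exists_idx {X : Type} {w : X → ℝ} (A : UBalObj) (h : X → A.carrier)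
    (hle : ∀ x, lnorm (h x) ≤ w x) :
    ∃ (i : Idx X w) (ψ : ↥i.s →ₐ[ℝ] A.carrier), IsBalHom ψ ∧ ∀ x, ψ (i.h x) = h x := by
  classical
  have hAone : (0 : A.carrier) ≤ 1 := LAlg.one_nonneg A.bounded
  -- the closed subalgebra generated by h
  set D : LCl A.carrier := LAlg.genLCl A.bounded h with hD
  have hDbd : LAlg.IsBounded ↥D := D.isBounded A.bounded
  have hDarch : LAlg.IsArch ↥D := D.isArch A.arch
  have hDcompl : UnifComplete ↥D :=
    D.unifComplete A.bounded A.arch A.complete LAlg.genSet_isLimClosed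
  set hDf : X → ↥D := fun x => ⟨h x, LAlg.var_mem_genSet A.bounded x⟩ with hhDf
  have hDn : ∀ x, |hDf x| ≤ (w x) • (1 : ↥D) := by
    intro x
    rw [D.coe_le_coe]
    have : |h x| ≤ (w x) • (1 : A.carrier) := LAlg.abs_le_smul_one A.bounded A.arch (hle x)
    simpa using this
  -- approximation sequences give an injection into `ℕ → LTerm X`
  have happrox : ∀ d : ↥D, ∀ n : ℕ, ∃ t : LTerm X,
      |(d : A.carrier) - LTerm.eval h t| ≤ (1/(n+1) : ℝ) • (1 : A.carrier) := by
    intro d n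
    exact d.2 (1/(n+1) : ℝ) (by positivity)
  choose tseq htseq using happrox
  have hinj : Function.Injective tseq := by
    intro d d' heq
    have key : ∀ ε : ℝ, 0 < ε → |(d : A.carrier) - (d' : A.carrier)| ≤ ε • (1 : A.carrier) := by
      intro ε hε
      obtain ⟨n, hn⟩ := exists_nat_gt (2/ε)
      have hpos : (0:ℝ) < n + 1 := by positivity
      have h2 : (2/(n+1) : ℝ) ≤ ε := by
        rw [div_le_iff₀ hpos]
        have h3 : 2/ε < (n:ℝ) := hn
        have h4 : (2:ℝ) < ε * n := by
          rw [div_lt_iff₀ hε] at h3; linarith [h3]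
        nlinarith [hε]
      have t1 := htseq d n
      have t2 := htseq d' n
      rw [heq] at t1
      calc |(d : A.carrier) - (d' : A.carrier)|
          = |((d : A.carrier) - LTerm.eval h (tseq d' n))
              + (LTerm.eval h (tseq d' n) - (d' : A.carrier))| := congrArg abs (by abel)
        _ ≤ |(d : A.carrier) - LTerm.eval h (tseq d' n)|
              + |LTerm.eval h (tseq d' n) - (d' : A.carrier)| := abs_add_le _ _
        _ ≤ (1/(n+1) : ℝ) • (1 : A.carrier) + (1/(n+1) : ℝ) • 1 := by
            refine add_le_add t1 ?_
            rw [abs_sub_comm]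
            exact t2
        _ = (2/(n+1) : ℝ) • (1 : A.carrier) := by rw [← add_smul]; ring_nf
        _ ≤ ε • (1 : A.carrier) := LAlg.smul_one_le_smul_one hAone h2
    exact Subtype.ext (LAlg.eq_of_forall_abs_le_eps A.arch hAone key)
  set sT : Set (ℕ → LTerm X) := Set.range tseq with hsT
  set φ : ↥sT ≃ ↥D := (Equiv.ofInjective tseq hinj).symm with hφ
  letI instZ : LAlg ↥sT := LAlg.transport φ
  -- basic facts about the transported structure
  have hle' : ∀ a b : ↥sT, a ≤ b ↔ φ a ≤ φ b := fun a b => Iff.rfl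
  have hadd : ∀ a b : ↥sT, φ (a + b) = φ a + φ b := fun a b =>
    φ.apply_symm_apply (φ a + φ b)
  have hmul : ∀ a b : ↥sT, φ (a * b) = φ a * φ b := fun a b =>
    φ.apply_symm_apply (φ a * φ b)
  have hzero : φ (0 : ↥sT) = 0 := φ.apply_symm_apply 0
  have hone : φ (1 : ↥sT) = 1 := φ.apply_symm_apply 1
  have hsup : ∀ a b : ↥sT, φ (a ⊔ b) = φ a ⊔ φ b := fun a b =>
    φ.apply_symm_apply (φ a ⊔ φ b)
  have hsmul0 : ∀ (r : ℝ) (a : ↥sT), φ (r • a) = r • φ a := fun r a =>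
    φ.apply_symm_apply (r • φ a)
  have halg : ∀ r : ℝ, φ (algebraMap ℝ ↥sT r) = algebraMap ℝ ↥D r := by
    intro r
    rw [Algebra.algebraMap_eq_smul_one, Algebra.algebraMap_eq_smul_one, hsmul0, hone]
  -- the algebra morphism to `D`
  set Φ : ↥sT →ₐ[ℝ] ↥D :=
    { toFun := φ
      map_one' := hone
      map_mul' := hmul
      map_zero' := hzero
      map_add' := hadd
      commutes' := halg } with hΦ
  have hneg : ∀ a : ↥sT, φ (-a) = -φ a := fun a => map_neg Φ a
  have hsub : ∀ a b : ↥sT, φ (a - b) = φ a - φ b := fun a b => map_sub Φ a b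
  have hnsmul : ∀ (n : ℕ) (a : ↥sT), φ (n • a) = n • φ a := fun n a => map_nsmul Φ n a
  have habs : ∀ a : ↥sT, φ |a| = |φ a| := by
    intro a
    show φ (a ⊔ -a) = φ a ⊔ -φ a
    rw [hsup, hneg]
  have hsmulone : ∀ r : ℝ, φ (r • (1 : ↥sT)) = r • (1 : ↥D) := by
    intro r; rw [hsmul0, hone]
  have hlnorm : ∀ a : ↥sT, lnorm a = lnorm (φ a) := by
    intro a
    unfold lnorm
    congr 1
    ext r
    show (a ⊔ -a ≤ r • 1) ↔ (φ a ⊔ -φ a ≤ r • 1)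
    rw [hle' _ _, hsup, hneg, hsmulone]
  -- the transported structure is bounded, archimedean, complete
  have hbddZ : LAlg.IsBounded ↥sT := by
    intro a
    obtain ⟨n, hn⟩ := hDbd (φ a)
    refine ⟨n, ?_⟩
    rw [hle' _ _, hnsmul, hone]
    exact hn
  have harchZ : LAlg.IsArch ↥sT := by
    intro a b hab
    rw [hle' _ _, hzero]
    refine hDarch (φ a) (φ b) fun n => ?_
    have := (hle' _ _).mp (hab n)
    rwa [hnsmul] at this
  have hcomplZ : UnifComplete ↥sT := by
    intro u hu
    obtain ⟨c, hc⟩ := hDcompl (fun n => φ (u n)) (by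
      intro ε hε
      obtain ⟨N, hN⟩ := hu ε hε
      refine ⟨N, fun m hm n hn => ?_⟩
      have := hN m hm n hn
      rwa [hlnorm, hsub] at this)
    refine ⟨φ.symm c, fun ε hε => ?_⟩
    obtain ⟨N, hN⟩ := hc ε hε
    refine ⟨N, fun n hn => ?_⟩
    rw [hlnorm, hsub, Equiv.apply_symm_apply]
    exact hN n hn
  -- build the index element
  set hZ : X → ↥sT := fun x => φ.symm (hDf x) with hhZ
  have hnZ : ∀ x, |hZ x| ≤ (w x) • (1 : ↥sT) := by
    intro x
    rw [hle' _ _, habs, hsmulone, hhZ]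
    simp only [Equiv.apply_symm_apply]
    exact hDn x
  refine ⟨⟨sT, hZ, hbddZ, harchZ, hcomplZ, hnZ⟩, D.valHom.comp Φ, ?_, ?_⟩
  · intro a b
    show (Φ (a ⊔ b) : A.carrier) = (Φ a : A.carrier) ⊔ (Φ b : A.carrier)
    show (φ (a ⊔ b) : A.carrier) = _
    rw [hsup]
    rfl
  · intro x
    show ((φ (φ.symm (hDf x)) : ↥D) : A.carrier) = h x
    rw [Equiv.apply_symm_apply]

end LAlg

/-! ### bal-morphisms are monotone and contractive; uniqueness -/

namespace LAlg

variable {A₁ A₂ : Type*} [LAlg A₁] [LAlg A₂]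

theorem balHom_mono {α : A₁ →ₐ[ℝ] A₂} (hα : IsBalHom α) {a b : A₁} (h : a ≤ b) :
    α a ≤ α b := by
  have h2 := hα a b
  rw [sup_eq_right.mpr h] at h2
  rw [h2]
  exact le_sup_left

theorem balHom_abs {α : A₁ →ₐ[ℝ] A₂} (hα : IsBalHom α) (a : A₁) : α |a| = |α a| := by
  show α (a ⊔ -a) = α a ⊔ -α a
  rw [hα a (-a), map_neg]

theorem balHom_contract {α : A₁ →ₐ[ℝ] A₂} (hα : IsBalHom α) {a b : A₁} {ε : ℝ}
    (h : |a - b| ≤ ε • (1 : A₁)) : |α a - α b| ≤ ε • (1 : A₂) := by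
  have h2 : α |a - b| ≤ α (ε • (1 : A₁)) := balHom_mono hα h
  rw [balHom_abs hα, map_sub] at h2
  rwa [map_smul, map_one] at h2
end LAlg

namespace FreeF

variable {X : Type} {w : X → ℝ}

theorem unique_hom (hw : ∀ x, 0 ≤ w x) (A : UBalObj)
    (α₁ α₂ : ↥(BCl : LCl (FreeP X w)) →ₐ[ℝ] A.carrier)
    (h₁ : IsBalHom α₁) (h₂ : IsBalHom α₂) (hf : ∀ x, α₁ (fB x) = α₂ (fB x)) : α₁ = α₂ := by
  have hAone : (0 : A.carrier) ≤ 1 := LAlg.one_nonneg A.bounded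
  set s : Set (FreeP X w) :=
    {p | ∃ hp : p ∈ Bset, α₁ ⟨p, hp⟩ = α₂ ⟨p, hp⟩} with hs
  have hcl : ClosedSub s := by
    refine ⟨?_, ?_, ?_, ?_, ?_, ?_⟩
    · intro x
      refine ⟨fvec_mem_BCl x, ?_⟩
      exact hf x
    · intro r
      refine ⟨closedSub_Bset.2.1 r, ?_⟩
      have hmk : (⟨algebraMap ℝ (FreeP X w) r, closedSub_Bset.2.1 r⟩ : ↥(BCl : LCl (FreeP X w)))
          = algebraMap ℝ _ r := rfl
      rw [hmk, AlgHom.commutes, AlgHom.commutes]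
    · rintro a b ⟨ha, hae⟩ ⟨hb, hbe⟩
      refine ⟨closedSub_Bset.2.2.1 ha hb, ?_⟩
      have hmk : (⟨a + b, closedSub_Bset.2.2.1 ha hb⟩ : ↥(BCl : LCl (FreeP X w)))
          = ⟨a, ha⟩ + ⟨b, hb⟩ := rfl
      rw [hmk, map_add, map_add, hae, hbe]
    · rintro a b ⟨ha, hae⟩ ⟨hb, hbe⟩
      refine ⟨closedSub_Bset.2.2.2.1 ha hb, ?_⟩
      have hmk : (⟨a * b, closedSub_Bset.2.2.2.1 ha hb⟩ : ↥(BCl : LCl (FreeP X w)))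
          = ⟨a, ha⟩ * ⟨b, hb⟩ := rfl
      rw [hmk, map_mul, map_mul, hae, hbe]
    · rintro a b ⟨ha, hae⟩ ⟨hb, hbe⟩
      refine ⟨closedSub_Bset.2.2.2.2.1 ha hb, ?_⟩
      have hmk : (⟨a ⊔ b, closedSub_Bset.2.2.2.2.1 ha hb⟩ : ↥(BCl : LCl (FreeP X w)))
          = ⟨a, ha⟩ ⊔ ⟨b, hb⟩ := rfl
      rw [hmk, h₁ _ _, h₂ _ _, hae, hbe]
    · intro b hb
      have hbB : b ∈ Bset := by
        apply closedSub_Bset.2.2.2.2.2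
        intro ε hε
        obtain ⟨c, hc, hcle⟩ := hb ε hε
        exact ⟨c, hc.1, hcle⟩
      refine ⟨hbB, ?_⟩
      refine LAlg.eq_of_forall_abs_le_eps A.arch hAone fun ε hε => ?_
      obtain ⟨c, ⟨hcB, hce⟩, hcle⟩ := hb (ε/2) (by positivity)
      have hlift : |(⟨b, hbB⟩ : ↥(BCl : LCl (FreeP X w))) - ⟨c, hcB⟩|
          ≤ (ε/2) • (1 : ↥(BCl : LCl (FreeP X w))) := by
        rw [LCl.coe_le_coe]
        simpa using hcle
      have k₁ := LAlg.balHom_contract h₁ hlift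
      have k₂ := LAlg.balHom_contract h₂ hlift
      rw [hce] at k₁
      calc |α₁ ⟨b, hbB⟩ - α₂ ⟨b, hbB⟩|
          = |(α₁ ⟨b, hbB⟩ - α₂ ⟨c, hcB⟩) + (α₂ ⟨c, hcB⟩ - α₂ ⟨b, hbB⟩)| := congrArg abs (by abel)
        _ ≤ |α₁ ⟨b, hbB⟩ - α₂ ⟨c, hcB⟩| + |α₂ ⟨c, hcB⟩ - α₂ ⟨b, hbB⟩| := abs_add_le _ _
        _ ≤ (ε/2) • (1 : A.carrier) + (ε/2) • 1 := by
            refine add_le_add k₁ ?_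
            rw [abs_sub_comm]
            exact k₂
        _ = ε • (1 : A.carrier) := by rw [← add_smul]; norm_num
  refine AlgHom.ext fun b => ?_
  obtain ⟨hbB, hbe⟩ := Bset_subset hcl b.2
  have : (⟨(b : FreeP X w), hbB⟩ : ↥(BCl : LCl (FreeP X w))) = b := Subtype.ext rfl
  rwa [this] at hbe

end FreeF


/-- the free uniformly complete bounded archimedean ℓ-algebra on a
weighted set (X, w) exists; consequently the forgetful functor ubal → WSet has a
left adjoint. -/
theorem stmt14 (X : Type) (w : X → ℝ) (hw : ∀ x, 0 ≤ w x) :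
    ∃ (B : UBalObj) (f : X → B.carrier),
      (∀ x, lnorm (f x) ≤ w x) ∧
      ∀ (A : UBalObj) (h : X → A.carrier), (∀ x, lnorm (h x) ≤ w x) →
        ∃! α : B.carrier →ₐ[ℝ] A.carrier, IsBalHom α ∧ α ∘ f = h := by
  classical
  refine ⟨⟨↥(FreeF.BCl : LCl (FreeP X w)), FreeF.BCl_bounded hw, FreeF.BCl_arch,
    FreeF.BCl_complete hw⟩, FreeF.fB, fun x => FreeF.lnorm_fB_le hw x, ?_⟩
  intro A h hle
  obtain ⟨i, ψ, hψbal, hψh⟩ := LAlg.exists_idx A h hle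
  set π : FreeP X w →ₐ[ℝ] ↥i.s := Pi.evalAlgHom ℝ (fun j : Idx X w => ↥j.s) i with hπ
  set α : ↥(FreeF.BCl : LCl (FreeP X w)) →ₐ[ℝ] A.carrier :=
    ψ.comp (π.comp (FreeF.BCl : LCl (FreeP X w)).valHom) with hα
  have hbal : IsBalHom α := by
    intro a b
    show ψ (π ((a ⊔ b : _) : FreeP X w)) = _
    have h1 : π ((a ⊔ b : _) : FreeP X w) = π (a : FreeP X w) ⊔ π (b : FreeP X w) := rfl
    rw [h1, hψbal]
    rfl
  have hcomp : α ∘ FreeF.fB = h := by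
    funext x
    show ψ (π (FreeF.fvec x)) = h x
    have h1 : π (FreeF.fvec x) = i.h x := rfl
    rw [h1, hψh]
  refine ⟨α, ⟨hbal, hcomp⟩, ?_⟩
  rintro α' ⟨hbal', hcomp'⟩
  refine FreeF.unique_hom hw A α' α hbal' hbal fun x => ?_
  have e1 : α' (FreeF.fB x) = h x := congrFun hcomp' x
  have e2 : α (FreeF.fB x) = h x := congrFun hcomp x
  rw [e1, e2]
end

section
/- Let X be a nonempty set. There is no unital vector lattice (F, u) together with a function f : X → F such that for every unital vector lattice (V, v) and every function g : X → V there exists a unique unital vector lattice homomorphism α : F → V with α ∘ f = g. Consequently, the forgetful functor from unital vector lattices to sets has no left adjoint. -/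
/-- A vector lattice (Riesz space): a real vector space with a lattice order such that
addition is translation-invariant and scalar multiplication by nonnegative reals
preserves nonnegativity. -/
class VLat (V : Type*) extends AddCommGroup V, Module ℝ V, Lattice V where
  add_le_add_right' : ∀ a b : V, a ≤ b → ∀ c : V, a + c ≤ b + c
  smul_nonneg' : ∀ (r : ℝ) (a : V), 0 ≤ r → 0 ≤ a → 0 ≤ r • a

/-- `u` is a strong order unit of `V`. -/
def IsStrongUnit {V : Type*} [VLat V] (u : V) : Prop := ∀ a : V, ∃ n : ℕ, a ≤ n • u

/-- The norm ‖a‖ = inf {r : ℝ | |a| ≤ r·u} of a unital vector lattice (V, u),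
where |a| = a ⊔ -a. -/
noncomputable def vnorm {V : Type*} [VLat V] (u : V) (a : V) : ℝ :=
  sInf {r : ℝ | a ⊔ -a ≤ r • u}

/-- A unital vector lattice homomorphism (V, u) → (W, v): a linear map preserving
binary joins and sending `u` to `v`. -/
def IsUVLatHom {V W : Type*} [VLat V] [VLat W] (u : V) (v : W) (α : V →ₗ[ℝ] W) : Prop :=
  (∀ a b : V, α (a ⊔ b) = α a ⊔ α b) ∧ α u = v

/-- there is no free unital vector lattice on a nonempty set; the
forgetful functor from unital vector lattices to sets has no left adjoint. -/
theorem stmt18 (X : Type) [Nonempty X] (F : Type) [VLat F] (u : F)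
    (hu : IsStrongUnit u) (f : X → F)
    (h : ∀ (V : Type) [VLat V], ∀ v : V, IsStrongUnit v →
      ∀ g : X → V, ∃! α : F →ₗ[ℝ] V, IsUVLatHom u v α ∧ α ∘ f = g) :
    False := by
  letI : VLat ℝ :=
    { add_le_add_right' := fun a b hab c => add_le_add_left hab c
      smul_nonneg' := fun r a hr ha => smul_nonneg hr ha }
  obtain ⟨x₀⟩ := ‹Nonempty X›
  obtain ⟨n, hn⟩ := hu (f x₀ ⊔ -(f x₀))
  have h1 : IsStrongUnit (1 : ℝ) := fun a => by
    obtain ⟨m, hm⟩ := exists_nat_ge a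
    exact ⟨m, by simpa using hm⟩
  obtain ⟨α, ⟨⟨hjoin, hunit⟩, hgf⟩, -⟩ := h ℝ 1 h1 (fun _ => (n : ℝ) + 1)
  have hmono : ∀ a b : F, a ≤ b → α a ≤ α b := by
    intro a b hab
    have : α a ⊔ α b = α b := by rw [← hjoin, sup_eq_right.mpr hab]
    exact le_of_sup_eq this
  have hle : α (f x₀) ≤ α ((n : ℕ) • u) := hmono _ _ (le_trans le_sup_left hn)
  have : α (f x₀) = (n : ℝ) + 1 := congrFun hgf x₀
  rw [this, map_nsmul, hunit] at hle
  simp only [nsmul_eq_mul, mul_one] at hle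
  linarith
end

section
/- Let (X, w) be a weighted set. Then there exist a unital vector lattice (F, u) and a function f : X → F with ‖f(x)‖ ≤ w(x) for all x ∈ X, such that for every unital vector lattice (V, v) and every function h : X → V with ‖h(x)‖ ≤ w(x) for all x ∈ X, there is a unique unital vector lattice homomorphism α : F → V with α ∘ f = h. Consequently, the forgetful functor from unital vector lattices to weighted sets has a left adjoint. -/
/-- A bundled unital vector lattice. -/
structure UVLObj where
  carrier : Type
  [str : VLat carrier]
  unit : carrier
  unit_strong : IsStrongUnit unit

attribute [instance] UVLObj.str

/-! ### Auxiliary lemmas about general vector lattices -/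

section VLatLemmas

variable {V : Type*} [VLat V]

instance (priority := 100) VLat.addLeftMono : CovariantClass V V (· + ·) (· ≤ ·) :=
  ⟨fun a b c h => by
    have := VLat.add_le_add_right' b c h a
    simpa [add_comm] using this⟩

instance (priority := 100) VLat.addRightMono :
    CovariantClass V V (Function.swap (· + ·)) (· ≤ ·) :=
  ⟨fun a b c h => VLat.add_le_add_right' b c h a⟩

lemma vsmul_le_vsmul_left {r : ℝ} (hr : 0 ≤ r) {a b : V} (hab : a ≤ b) : r • a ≤ r • b := by
  have h0 : (0 : V) ≤ b - a := by simpa using sub_nonneg.2 hab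
  have := VLat.smul_nonneg' r (b - a) hr h0
  rw [smul_sub] at this
  exact sub_nonneg.1 this

lemma vsmul_le_vsmul_right {r s : ℝ} (hrs : r ≤ s) {a : V} (ha : 0 ≤ a) : r • a ≤ s • a := by
  have := VLat.smul_nonneg' (s - r) a (by linarith) ha
  rw [sub_smul] at this
  exact sub_nonneg.1 this

lemma unit_nonneg {u : V} (hu : IsStrongUnit u) : (0 : V) ≤ u := by
  obtain ⟨n, hn⟩ := hu (-u)
  have h1 : (0 : V) ≤ n • u + u := by
    have := add_le_add_left hn u
    simpa using this
  have h2 : n • u + u = ((n : ℝ) + 1) • u := by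
    rw [add_smul, one_smul, Nat.cast_smul_eq_nsmul]
  rw [h2] at h1
  have h3 : ((n : ℝ) + 1)⁻¹ • (((n : ℝ) + 1) • u) = u := by
    rw [smul_smul, inv_mul_cancel₀ (by positivity), one_smul]
  calc (0 : V) ≤ ((n : ℝ) + 1)⁻¹ • (((n : ℝ) + 1) • u) :=
        VLat.smul_nonneg' _ _ (by positivity) h1
    _ = u := h3

/-- If `vnorm u a ≤ c` then `|a| ≤ (c + ε) • u` for every positive `ε`. -/
lemma abs_le_of_vnorm_le {u : V} (hu : IsStrongUnit u) {a : V} {c : ℝ}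
    (h : vnorm u a ≤ c) {ε : ℝ} (hε : 0 < ε) : a ⊔ -a ≤ (c + ε) • u := by
  set S : Set ℝ := {r : ℝ | a ⊔ -a ≤ r • u} with hS
  obtain ⟨n, hn⟩ := hu (a ⊔ -a)
  have hne : S.Nonempty := ⟨(n : ℝ), by
    simp only [hS, Set.mem_setOf_eq, Nat.cast_smul_eq_nsmul]; exact hn⟩
  have hlt : sInf S < c + ε := lt_of_le_of_lt h (by linarith)
  obtain ⟨r, hrS, hr⟩ := exists_lt_of_csInf_lt hne hlt
  calc a ⊔ -a ≤ r • u := hrS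
    _ ≤ (c + ε) • u := vsmul_le_vsmul_right hr.le (unit_nonneg hu)

end VLatLemmas

/-! ### ℝ as a unital vector lattice -/

noncomputable instance : VLat ℝ where
  add_le_add_right' := fun a b h c => add_le_add_left h c
  smul_nonneg' := fun r a hr ha => by simpa [smul_eq_mul] using mul_nonneg hr ha

lemma isStrongUnit_one : IsStrongUnit (1 : ℝ) := fun a =>
  ⟨⌈a⌉₊, by simpa [nsmul_eq_mul] using Nat.le_ceil a⟩

noncomputable def Robj : UVLObj := ⟨ℝ, 1, isStrongUnit_one⟩

lemma vnorm_zero_R : vnorm (1 : ℝ) (0 : ℝ) = 0 := by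
  have : {r : ℝ | (0 : ℝ) ⊔ -0 ≤ r • 1} = Set.Ici (0 : ℝ) := by
    ext r; simp [smul_eq_mul]
  rw [vnorm, this]
  exact csInf_Ici

/-! ### Terms -/

inductive Tm (X : Type) : Type
  | var : X → Tm X
  | unit : Tm X
  | add : Tm X → Tm X → Tm X
  | neg : Tm X → Tm X
  | smul : ℝ → Tm X → Tm X
  | join : Tm X → Tm X → Tm X

namespace Tm

variable {X : Type}

def ev {V : Type*} [VLat V] (v : V) (h : X → V) : Tm X → V
  | var x => h x
  | unit => v
  | add t s => ev v h t + ev v h s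
  | neg t => - ev v h t
  | smul r t => r • ev v h t
  | join t s => ev v h t ⊔ ev v h s

end Tm

/-- Validity of a valuation into a unital vector lattice. -/
def WValid {X : Type} (w : X → ℝ) (V : UVLObj) (h : X → V.carrier) : Prop :=
  ∀ x, vnorm V.unit (h x) ≤ w x

def tSetoid (X : Type) (w : X → ℝ) : Setoid (Tm X) where
  r t s := ∀ (V : UVLObj) (h : X → V.carrier), WValid w V h →
    Tm.ev V.unit h t = Tm.ev V.unit h s
  iseqv := ⟨fun _ _ _ _ => rfl, fun h V g hg => (h V g hg).symm,
    fun h1 h2 V g hg => (h1 V g hg).trans (h2 V g hg)⟩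

def FC (X : Type) (w : X → ℝ) : Type := Quotient (tSetoid X w)

namespace FC

variable {X : Type} {w : X → ℝ}

def mk (t : Tm X) : FC X w := Quotient.mk (tSetoid X w) t

lemma sound {t s : Tm X}
    (h : ∀ (V : UVLObj) (g : X → V.carrier), WValid w V g →
      Tm.ev V.unit g t = Tm.ev V.unit g s) : (mk t : FC X w) = mk s :=
  Quotient.sound h

instance : Add (FC X w) where
  add := Quotient.map₂ Tm.add (fun _ _ h1 _ _ h2 V g hg => by
    simp [Tm.ev, h1 V g hg, h2 V g hg])

instance : Zero (FC X w) where
  zero := mk (Tm.smul 0 Tm.unit)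

instance : Neg (FC X w) where
  neg := Quotient.map Tm.neg (fun _ _ h V g hg => by simp [Tm.ev, h V g hg])

instance : AddCommGroup (FC X w) where
  add := (· + ·)
  zero := 0
  neg := Neg.neg
  nsmul := nsmulRec
  zsmul := zsmulRec
  add_assoc := by
    rintro ⟨a⟩ ⟨b⟩ ⟨c⟩; exact sound fun V g hg => by simp [Tm.ev, add_assoc]
  zero_add := by
    rintro ⟨a⟩; exact sound fun V g hg => by simp [Tm.ev]
  add_zero := by
    rintro ⟨a⟩; exact sound fun V g hg => by simp [Tm.ev]
  add_comm := by
    rintro ⟨a⟩ ⟨b⟩; exact sound fun V g hg => by simp [Tm.ev, add_comm]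
  neg_add_cancel := by
    rintro ⟨a⟩; exact sound fun V g hg => by simp [Tm.ev]

noncomputable instance : SMul ℝ (FC X w) where
  smul r := Quotient.map (Tm.smul r) (fun _ _ h V g hg => by simp [Tm.ev, h V g hg])

noncomputable instance : Module ℝ (FC X w) where
  one_smul := by rintro ⟨a⟩; exact sound fun V g hg => by simp [Tm.ev]
  mul_smul r s := by rintro ⟨a⟩; exact sound fun V g hg => by simp [Tm.ev, mul_smul]
  smul_zero r := by exact sound fun V g hg => by simp [Tm.ev]
  smul_add r := by
    rintro ⟨a⟩ ⟨b⟩; exact sound fun V g hg => by simp [Tm.ev, smul_add]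
  add_smul r s := by rintro ⟨a⟩; exact sound fun V g hg => by simp [Tm.ev, add_smul]
  zero_smul := by rintro ⟨a⟩; exact sound fun V g hg => by simp [Tm.ev]

instance : LE (FC X w) where
  le a b := Quotient.liftOn₂ a b
    (fun t s => ∀ (V : UVLObj) (g : X → V.carrier), WValid w V g →
      Tm.ev V.unit g t ≤ Tm.ev V.unit g s)
    (fun _ _ _ _ h1 h2 => by
      ext
      constructor
      · intro H V g hg; rw [← h1 V g hg, ← h2 V g hg]; exact H V g hg
      · intro H V g hg; rw [h1 V g hg, h2 V g hg]; exact H V g hg)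

lemma le_def {t s : Tm X} : (mk t : FC X w) ≤ mk s ↔
    ∀ (V : UVLObj) (g : X → V.carrier), WValid w V g →
      Tm.ev V.unit g t ≤ Tm.ev V.unit g s := Iff.rfl

instance : Lattice (FC X w) where
  sup := Quotient.map₂ Tm.join (fun _ _ h1 _ _ h2 V g hg => by
    simp [Tm.ev, h1 V g hg, h2 V g hg])
  inf := Quotient.map₂ (fun t s => Tm.neg (Tm.join (Tm.neg t) (Tm.neg s)))
    (fun _ _ h1 _ _ h2 V g hg => by simp [Tm.ev, h1 V g hg, h2 V g hg])
  le_refl := by rintro ⟨a⟩; exact fun V g hg => le_rfl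
  le_trans := by
    rintro ⟨a⟩ ⟨b⟩ ⟨c⟩ h1 h2
    exact fun V g hg => (h1 V g hg).trans (h2 V g hg)
  le_antisymm := by
    rintro ⟨a⟩ ⟨b⟩ h1 h2
    exact sound fun V g hg => le_antisymm (h1 V g hg) (h2 V g hg)
  le_sup_left := by rintro ⟨a⟩ ⟨b⟩; exact fun V g hg => le_sup_left
  le_sup_right := by rintro ⟨a⟩ ⟨b⟩; exact fun V g hg => le_sup_right
  sup_le := by
    rintro ⟨a⟩ ⟨b⟩ ⟨c⟩ h1 h2
    exact fun V g hg => sup_le (h1 V g hg) (h2 V g hg)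
  inf_le_left := by
    rintro ⟨a⟩ ⟨b⟩
    intro V g hg
    show -(-(Tm.ev V.unit g a) ⊔ -(Tm.ev V.unit g b)) ≤ Tm.ev V.unit g a
    rw [neg_sup, neg_neg, neg_neg]
    exact inf_le_left
  inf_le_right := by
    rintro ⟨a⟩ ⟨b⟩
    intro V g hg
    show -(-(Tm.ev V.unit g a) ⊔ -(Tm.ev V.unit g b)) ≤ Tm.ev V.unit g b
    rw [neg_sup, neg_neg, neg_neg]
    exact inf_le_right
  le_inf := by
    rintro ⟨a⟩ ⟨b⟩ ⟨c⟩ h1 h2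
    intro V g hg
    show Tm.ev V.unit g a ≤ -(-(Tm.ev V.unit g b) ⊔ -(Tm.ev V.unit g c))
    rw [neg_sup, neg_neg, neg_neg]
    exact le_inf (h1 V g hg) (h2 V g hg)

noncomputable instance instVLat : VLat (FC X w) where
  add_le_add_right' := by
    rintro ⟨a⟩ ⟨b⟩ h ⟨c⟩
    exact fun V g hg => add_le_add_left (h V g hg) _
  smul_nonneg' := by
    rintro r ⟨a⟩ hr h
    intro V g hg
    have h0 := h V g hg
    show (0 : ℝ) • V.unit ≤ r • Tm.ev V.unit g a
    rw [zero_smul]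
    refine VLat.smul_nonneg' r _ hr ?_
    simpa [Tm.ev] using h0

end FC

section Bound

open FC

variable {X : Type} {w : X → ℝ}

lemma mk_add (t s : Tm X) : (mk t + mk s : FC X w) = mk (t.add s) := rfl
lemma mk_neg (t : Tm X) : (-mk t : FC X w) = mk t.neg := rfl
lemma mk_smul (r : ℝ) (t : Tm X) : (r • mk t : FC X w) = mk (Tm.smul r t) := rfl
lemma mk_sup (t s : Tm X) : (mk t ⊔ mk s : FC X w) = mk (t.join s) := rfl

/-- `r • a ≤ |r| • (a ⊔ -a)` in any vector lattice. -/
lemma smul_le_abs_smul_abs {V : Type*} [VLat V] (r : ℝ) (a : V) :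
    r • a ≤ |r| • (a ⊔ -a) := by
  rcases le_or_gt 0 r with hr | hr
  · rw [abs_of_nonneg hr]
    exact vsmul_le_vsmul_left hr le_sup_left
  · rw [abs_of_neg hr]
    have : r • a = (-r) • (-a) := by rw [neg_smul, smul_neg, neg_neg]
    rw [this]
    exact vsmul_le_vsmul_left (by linarith) le_sup_right

/-- Every term is uniformly bounded by a multiple of the unit, over all valid valuations. -/
lemma ev_bound (hw : ∀ x, 0 ≤ w x) (t : Tm X) :
    ∃ C : ℝ, 0 ≤ C ∧ ∀ (V : UVLObj) (g : X → V.carrier), WValid w V g →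
      Tm.ev V.unit g t ⊔ -Tm.ev V.unit g t ≤ C • V.unit := by
  induction t with
  | var x =>
    refine ⟨w x + 1, by linarith [hw x], fun V g hg => ?_⟩
    exact abs_le_of_vnorm_le V.unit_strong (hg x) one_pos
  | unit =>
    refine ⟨1, zero_le_one, fun V g hg => ?_⟩
    have hv := unit_nonneg V.unit_strong
    simp only [Tm.ev, one_smul]
    exact sup_le le_rfl ((neg_nonpos.2 hv).trans hv)
  | add t s iht ihs =>
    obtain ⟨C1, hC1, h1⟩ := iht
    obtain ⟨C2, hC2, h2⟩ := ihs
    refine ⟨C1 + C2, by linarith, fun V g hg => ?_⟩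
    have ha := h1 V g hg; have hb := h2 V g hg
    set a := Tm.ev V.unit g t; set b := Tm.ev V.unit g s
    have haa : a ≤ C1 • V.unit := le_sup_left.trans ha
    have hna : -a ≤ C1 • V.unit := le_sup_right.trans ha
    have hbb : b ≤ C2 • V.unit := le_sup_left.trans hb
    have hnb : -b ≤ C2 • V.unit := le_sup_right.trans hb
    show (a + b) ⊔ -(a + b) ≤ (C1 + C2) • V.unit
    rw [add_smul]
    refine sup_le (add_le_add haa hbb) ?_
    rw [neg_add]
    exact add_le_add hna hnb
  | neg t iht =>
    obtain ⟨C, hC, h⟩ := iht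
    refine ⟨C, hC, fun V g hg => ?_⟩
    have := h V g hg
    show (-Tm.ev V.unit g t) ⊔ -(-Tm.ev V.unit g t) ≤ C • V.unit
    rw [neg_neg, sup_comm]
    exact this
  | smul r t iht =>
    obtain ⟨C, hC, h⟩ := iht
    refine ⟨|r| * C, mul_nonneg (abs_nonneg r) hC, fun V g hg => ?_⟩
    have habs := h V g hg
    set a := Tm.ev V.unit g t
    have key : ∀ b : V.carrier, b = a ∨ b = -a → r • b ≤ (|r| * C) • V.unit := by
      rintro b hb
      have h1 : r • b ≤ |r| • (b ⊔ -b) := smul_le_abs_smul_abs r b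
      have h2 : b ⊔ -b ≤ C • V.unit := by
        rcases hb with rfl | rfl
        · exact habs
        · rw [neg_neg, sup_comm]; exact habs
      calc r • b ≤ |r| • (b ⊔ -b) := h1
        _ ≤ |r| • (C • V.unit) := vsmul_le_vsmul_left (abs_nonneg r) h2
        _ = (|r| * C) • V.unit := (smul_smul _ _ _)
    show (r • a) ⊔ -(r • a) ≤ (|r| * C) • V.unit
    refine sup_le (key a (Or.inl rfl)) ?_
    have : -(r • a) = r • (-a) := (smul_neg r a).symm
    rw [this]
    exact key (-a) (Or.inr rfl)
  | join t s iht ihs =>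
    obtain ⟨C1, hC1, h1⟩ := iht
    obtain ⟨C2, hC2, h2⟩ := ihs
    refine ⟨C1 + C2, by linarith, fun V g hg => ?_⟩
    have ha := h1 V g hg; have hb := h2 V g hg
    set a := Tm.ev V.unit g t; set b := Tm.ev V.unit g s
    have hv := unit_nonneg V.unit_strong
    have hC1v : C1 • V.unit ≤ (C1 + C2) • V.unit :=
      vsmul_le_vsmul_right (by linarith) hv
    have hC2v : C2 • V.unit ≤ (C1 + C2) • V.unit :=
      vsmul_le_vsmul_right (by linarith) hv
    show (a ⊔ b) ⊔ -(a ⊔ b) ≤ (C1 + C2) • V.unit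
    refine sup_le (sup_le ((le_sup_left.trans ha).trans hC1v)
      ((le_sup_left.trans hb).trans hC2v)) ?_
    rw [neg_sup]
    exact inf_le_left.trans ((le_sup_right.trans ha).trans hC1v)

lemma FC.unit_strong (hw : ∀ x, 0 ≤ w x) : IsStrongUnit (mk Tm.unit : FC X w) := by
  rintro ⟨t⟩
  obtain ⟨C, hC0, hC⟩ := ev_bound hw t
  refine ⟨⌈C⌉₊, ?_⟩
  have hcast : (⌈C⌉₊ • (mk Tm.unit : FC X w)) = ((⌈C⌉₊ : ℝ) • mk Tm.unit : FC X w) :=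
    (Nat.cast_smul_eq_nsmul ℝ _ _).symm
  rw [hcast, mk_smul]
  intro V g hg
  have := hC V g hg
  calc Tm.ev V.unit g t ≤ Tm.ev V.unit g t ⊔ -Tm.ev V.unit g t := le_sup_left
    _ ≤ C • V.unit := this
    _ ≤ (⌈C⌉₊ : ℝ) • V.unit := vsmul_le_vsmul_right (Nat.le_ceil C) (unit_nonneg V.unit_strong)

end Bound

noncomputable def Fobj (X : Type) (w : X → ℝ) (hw : ∀ x, 0 ≤ w x) : UVLObj :=
  ⟨FC X w, FC.mk Tm.unit, FC.unit_strong hw⟩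

/-- the free unital vector lattice on a weighted set (X, w) exists;
consequently the forgetful functor from unital vector lattices to weighted sets has a
left adjoint. -/
theorem stmt19 (X : Type) (w : X → ℝ) (hw : ∀ x, 0 ≤ w x) :
    ∃ (F : UVLObj) (f : X → F.carrier),
      (∀ x, vnorm F.unit (f x) ≤ w x) ∧
      ∀ (V : UVLObj) (h : X → V.carrier), (∀ x, vnorm V.unit (h x) ≤ w x) →
        ∃! α : F.carrier →ₗ[ℝ] V.carrier, IsUVLatHom F.unit V.unit α ∧ α ∘ f = h := by
  refine ⟨Fobj X w hw, fun x => FC.mk (Tm.var x), ?_, ?_⟩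
  · -- the norm bound on the generators
    intro x
    unfold vnorm
    set S : Set ℝ :=
      {r : ℝ | (FC.mk (Tm.var x) : FC X w) ⊔ -FC.mk (Tm.var x) ≤ r • FC.mk Tm.unit} with hS
    have hbdd : BddBelow S := by
      refine ⟨0, fun r hr => ?_⟩
      have h0 : WValid w Robj (fun _ => (0 : ℝ)) := by
        intro y
        show vnorm (1 : ℝ) (0 : ℝ) ≤ w y
        rw [vnorm_zero_R]; exact hw y
      have := hr Robj (fun _ => (0 : ℝ)) h0
      have h3 : (0 : ℝ) ≤ r • (1 : ℝ) := le_sup_left.trans this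
      simpa using h3
    have hmem : ∀ ε : ℝ, 0 < ε → w x + ε ∈ S := by
      intro ε hε
      intro V g hg
      show Tm.ev V.unit g (Tm.var x) ⊔ -Tm.ev V.unit g (Tm.var x) ≤ (w x + ε) • V.unit
      exact abs_le_of_vnorm_le V.unit_strong (hg x) hε
    refine le_of_forall_pos_le_add fun ε hε => ?_
    exact csInf_le hbdd (hmem ε hε)
  · -- the universal property
    intro V h hv
    let α : FC X w →ₗ[ℝ] V.carrier :=
      { toFun := Quotient.lift (Tm.ev V.unit h) (fun t s hts => hts V h hv)
        map_add' := by rintro ⟨t⟩ ⟨s⟩; rfl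
        map_smul' := by rintro r ⟨t⟩; rfl }
    have hαmk : ∀ t : Tm X, α (FC.mk t) = Tm.ev V.unit h t := fun t => rfl
    refine ⟨α, ⟨⟨?_, rfl⟩, ?_⟩, ?_⟩
    · rintro ⟨t⟩ ⟨s⟩; rfl
    · rfl
    · rintro β ⟨⟨hβsup, hβu⟩, hβf⟩
      apply LinearMap.ext
      rintro ⟨t⟩
      show β (FC.mk t) = α (FC.mk t)
      induction t with
      | var x =>
        rw [hαmk]
        exact congrFun hβf x
      | unit => exact hβu
      | add t s iht ihs =>
        have e : (FC.mk (t.add s) : FC X w) = FC.mk t + FC.mk s := rfl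
        rw [show β (FC.mk (t.add s)) = β (FC.mk t) + β (FC.mk s) from map_add β (FC.mk t) (FC.mk s), iht, ihs]; rfl
      | neg t iht =>
        have e : (FC.mk t.neg : FC X w) = -FC.mk t := rfl
        rw [show β (FC.mk t.neg) = -β (FC.mk t) from map_neg β (FC.mk t), iht]; rfl
      | smul r t iht =>
        have e : (FC.mk (Tm.smul r t) : FC X w) = r • FC.mk t := rfl
        rw [show β (FC.mk (Tm.smul r t)) = r • β (FC.mk t) from map_smul β r (FC.mk t), iht]; rfl
      | join t s iht ihs =>
        have e : (FC.mk (t.join s) : FC X w) = FC.mk t ⊔ FC.mk s := rfl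
        rw [show β (FC.mk (t.join s)) = β (FC.mk t) ⊔ β (FC.mk s) from hβsup (FC.mk t) (FC.mk s), iht, ihs]; rfl
end
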